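/- arXiv:1812.07850 — 8 statements merged into one kernel-verified Lean document; each statement's English description precedes it below -/
import Mathlib

section
/- If φ and ψ are Marshall generators, then the function C^M_{φ,ψ} : [0,1]×[0,1] → [0,1] defined by C^M_{φ,ψ}(u,v) = min{φ(u)·v, ψ(v)·u} is a copula: it satisfies C^M_{φ,ψ}(u,0) = C^M_{φ,ψ}(0,v) = 0, C^M_{φ,ψ}(u,1) = u, C^M_{φ,ψ}(1,v) = v for all u,v ∈ [0,1], and C^M_{φ,ψ}(u₂,v₂) − C^M_{φ,ψ}(u₁,v₂) − C^M_{φ,ψ}(u₂,v₁) + C^M_{φ,ψ}(u₁,v₁) ≥ 0 whenever 0 ≤ u₁ ≤ u₂ ≤ 1 and 0 ≤ v₁ ≤ v₂ ≤ 1. -/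
lemma marshall_key (u₁ u₂ v₁ v₂ a₁ a₂ b₁ b₂ : ℝ)
    (hu₁ : 0 ≤ u₁) (hu : u₁ ≤ u₂) (hv₁ : 0 ≤ v₁) (hv : v₁ ≤ v₂)
    (ha : a₁ ≤ a₂) (hb : b₁ ≤ b₂)
    (hra : a₂ * u₁ ≤ a₁ * u₂) (hrb : b₂ * v₁ ≤ b₁ * v₂) :
    min (a₁*v₂) (b₂*u₁) + min (a₂*v₁) (b₁*u₂) ≤ min (a₂*v₂) (b₂*u₂) + min (a₁*v₁) (b₁*u₁) := by
  have h1 := min_le_left (a₁*v₂) (b₂*u₁)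
  have h2 := min_le_right (a₁*v₂) (b₂*u₁)
  have h3 := min_le_left (a₂*v₁) (b₁*u₂)
  have h4 := min_le_right (a₂*v₁) (b₁*u₂)
  rcases min_cases (a₂*v₂) (b₂*u₂) with ⟨e1, c1⟩ | ⟨e1, c1⟩ <;>
  rcases min_cases (a₁*v₁) (b₁*u₁) with ⟨e2, c2⟩ | ⟨e2, c2⟩ <;>
  rw [e1, e2] <;>
  nlinarith [mul_nonneg (sub_nonneg.2 ha) (sub_nonneg.2 hv),
    mul_nonneg (sub_nonneg.2 hb) (sub_nonneg.2 hu), mul_nonneg hu₁ hv₁,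
    mul_nonneg (le_trans hu₁ hu) (le_trans hv₁ hv)]

/-- The Marshall copula `C^M_{φ,ψ}(u,v) = min (φ u * v) (ψ v * u)` of two
Marshall generators is a copula. -/
theorem marshall_copula_is_copula
    (φ ψ : ℝ → ℝ)
    (hφmono : MonotoneOn φ (Set.Icc 0 1))
    (hψmono : MonotoneOn ψ (Set.Icc 0 1))
    (hφ01 : ∀ u ∈ Set.Icc (0:ℝ) 1, φ u ∈ Set.Icc (0:ℝ) 1)
    (hψ01 : ∀ v ∈ Set.Icc (0:ℝ) 1, ψ v ∈ Set.Icc (0:ℝ) 1)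
    (hφ0 : φ 0 = 0) (hφ1 : φ 1 = 1)
    (hψ0 : ψ 0 = 0) (hψ1 : ψ 1 = 1)
    (hφratio : ∀ u u' : ℝ, 0 ≤ u → u ≤ u' → u' ≤ 1 → φ u' * u ≤ φ u * u')
    (hψratio : ∀ v v' : ℝ, 0 ≤ v → v ≤ v' → v' ≤ 1 → ψ v' * v ≤ ψ v * v')
    (C : ℝ → ℝ → ℝ)
    (hC : ∀ u v : ℝ, C u v = min (φ u * v) (ψ v * u)) :
    (∀ u ∈ Set.Icc (0:ℝ) 1, ∀ v ∈ Set.Icc (0:ℝ) 1, C u v ∈ Set.Icc (0:ℝ) 1) ∧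
    (∀ u ∈ Set.Icc (0:ℝ) 1, C u 0 = 0) ∧
    (∀ v ∈ Set.Icc (0:ℝ) 1, C 0 v = 0) ∧
    (∀ u ∈ Set.Icc (0:ℝ) 1, C u 1 = u) ∧
    (∀ v ∈ Set.Icc (0:ℝ) 1, C 1 v = v) ∧
    (∀ u₁ u₂ v₁ v₂ : ℝ, 0 ≤ u₁ → u₁ ≤ u₂ → u₂ ≤ 1 → 0 ≤ v₁ → v₁ ≤ v₂ → v₂ ≤ 1 →
      0 ≤ C u₂ v₂ - C u₁ v₂ - C u₂ v₁ + C u₁ v₁) := by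
  refine ⟨?_, ?_, ?_, ?_, ?_, ?_⟩
  · intro u hu v hv
    rw [hC]
    obtain ⟨hφ0', hφ1'⟩ := hφ01 u hu
    obtain ⟨hψ0', hψ1'⟩ := hψ01 v hv
    constructor
    · exact le_min (mul_nonneg hφ0' hv.1) (mul_nonneg hψ0' hu.1)
    · exact le_trans (min_le_left _ _) (mul_le_one₀ hφ1' hv.1 hv.2)
  · intro u hu
    rw [hC, hψ0]
    simp
  · intro v hv
    rw [hC, hφ0]
    simp
  · intro u hu
    rw [hC, hψ1]
    have := hφratio u 1 hu.1 hu.2 le_rfl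
    rw [hφ1] at this
    simp only [mul_one, one_mul]
    exact min_eq_right (by linarith)
  · intro v hv
    rw [hC, hφ1]
    have := hψratio v 1 hv.1 hv.2 le_rfl
    rw [hψ1] at this
    simp only [mul_one, one_mul]
    exact min_eq_left (by linarith)
  · intro u₁ u₂ v₁ v₂ hu₁ hu hu₂ hv₁ hv hv₂
    have hu₁m : u₁ ∈ Set.Icc (0:ℝ) 1 := ⟨hu₁, le_trans hu hu₂⟩
    have hu₂m : u₂ ∈ Set.Icc (0:ℝ) 1 := ⟨le_trans hu₁ hu, hu₂⟩
    have hv₁m : v₁ ∈ Set.Icc (0:ℝ) 1 := ⟨hv₁, le_trans hv hv₂⟩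
    have hv₂m : v₂ ∈ Set.Icc (0:ℝ) 1 := ⟨le_trans hv₁ hv, hv₂⟩
    have key := marshall_key u₁ u₂ v₁ v₂ (φ u₁) (φ u₂) (ψ v₁) (ψ v₂)
      hu₁ hu hv₁ hv (hφmono hu₁m hu₂m hu) (hψmono hv₁m hv₂m hv)
      (hφratio u₁ u₂ hu₁ hu hu₂) (hψratio v₁ v₂ hv₁ hv hv₂)
    simp only [hC]
    linarith
end

section
/- If φ is a Marshall generator and χ is a maxmin second generator, then the function C^MM_{φ,χ} : [0,1]×[0,1] → [0,1] defined by C^MM_{φ,χ}(u,w) = uw + min{u(1−w), (φ(u)−u)(w−χ(w))} is a copula: it satisfies C^MM_{φ,χ}(u,0) = C^MM_{φ,χ}(0,w) = 0, C^MM_{φ,χ}(u,1) = u, C^MM_{φ,χ}(1,w) = w for all u,w ∈ [0,1], and C^MM_{φ,χ}(u₂,w₂) − C^MM_{φ,χ}(u₁,w₂) − C^MM_{φ,χ}(u₂,w₁) + C^MM_{φ,χ}(u₁,w₁) ≥ 0 whenever 0 ≤ u₁ ≤ u₂ ≤ 1 and 0 ≤ w₁ ≤ w₂ ≤ 1. 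-/
set_option maxHeartbeats 1000000


/-- The maxmin copula `C^MM_{φ,χ}(u,w) = uw + min (u(1-w)) ((φ u - u)(w - χ w))`
of a Marshall generator φ and a maxmin second generator χ is a copula. -/
theorem maxmin_copula_is_copula
    (φ χ : ℝ → ℝ)
    (hφmono : MonotoneOn φ (Set.Icc 0 1))
    (hχmono : MonotoneOn χ (Set.Icc 0 1))
    (hφ01 : ∀ u ∈ Set.Icc (0:ℝ) 1, φ u ∈ Set.Icc (0:ℝ) 1)
    (hχ01 : ∀ w ∈ Set.Icc (0:ℝ) 1, χ w ∈ Set.Icc (0:ℝ) 1)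
    (hφ0 : φ 0 = 0) (hφ1 : φ 1 = 1)
    (hχ0 : χ 0 = 0) (hχ1 : χ 1 = 1)
    (hχle : ∀ w ∈ Set.Icc (0:ℝ) 1, χ w ≤ w)
    (hφratio : ∀ u u' : ℝ, 0 ≤ u → u ≤ u' → u' ≤ 1 → φ u' * u ≤ φ u * u')
    (hχratio : ∀ w w' : ℝ, 0 ≤ w → w ≤ w' → w' ≤ 1 →
      (1 - χ w') * (w - χ w) ≤ (1 - χ w) * (w' - χ w'))
    (C : ℝ → ℝ → ℝ)
    (hC : ∀ u w : ℝ, C u w = u * w + min (u * (1 - w)) ((φ u - u) * (w - χ w))) :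
    (∀ u ∈ Set.Icc (0:ℝ) 1, ∀ w ∈ Set.Icc (0:ℝ) 1, C u w ∈ Set.Icc (0:ℝ) 1) ∧
    (∀ u ∈ Set.Icc (0:ℝ) 1, C u 0 = 0) ∧
    (∀ w ∈ Set.Icc (0:ℝ) 1, C 0 w = 0) ∧
    (∀ u ∈ Set.Icc (0:ℝ) 1, C u 1 = u) ∧
    (∀ w ∈ Set.Icc (0:ℝ) 1, C 1 w = w) ∧
    (∀ u₁ u₂ w₁ w₂ : ℝ, 0 ≤ u₁ → u₁ ≤ u₂ → u₂ ≤ 1 → 0 ≤ w₁ → w₁ ≤ w₂ → w₂ ≤ 1 →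
      0 ≤ C u₂ w₂ - C u₁ w₂ - C u₂ w₁ + C u₁ w₁) := by
  have hφge : ∀ u : ℝ, 0 ≤ u → u ≤ 1 → u ≤ φ u := by
    intro u h0 h1
    have := hφratio u 1 h0 h1 le_rfl
    rw [hφ1] at this; linarith
  refine ⟨?_, ?_, ?_, ?_, ?_, ?_⟩
  · -- range
    intro u hu w hw
    rw [Set.mem_Icc] at hu hw ⊢
    have h1 : 0 ≤ u * (1 - w) := mul_nonneg hu.1 (by linarith [hw.2])
    have h2 : 0 ≤ (φ u - u) * (w - χ w) :=
      mul_nonneg (by linarith [hφge u hu.1 hu.2])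
        (by linarith [hχle w (Set.mem_Icc.mpr hw)])
    constructor
    · rw [hC]
      have := le_min h1 h2
      nlinarith [mul_nonneg hu.1 hw.1]
    · rw [hC]
      have hmin : min (u * (1 - w)) ((φ u - u) * (w - χ w)) ≤ u * (1 - w) :=
        min_le_left _ _
      nlinarith
  · -- C u 0 = 0
    intro u hu
    rw [Set.mem_Icc] at hu
    rw [hC, hχ0]
    have h : (φ u - u) * ((0:ℝ) - 0) = 0 := by ring
    rw [h, min_eq_right (by nlinarith [hu.1])]
    ring
  · -- C 0 w = 0
    intro w hw
    rw [hC, hφ0]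
    have h : ((0:ℝ) - 0) * (w - χ w) = 0 := by ring
    rw [h]
    have h2 : (0:ℝ) * (1 - w) = 0 := by ring
    rw [h2]
    simp
  · -- C u 1 = u
    intro u hu
    rw [hC, hχ1]
    have h : (φ u - u) * ((1:ℝ) - 1) = 0 := by ring
    have h2 : u * ((1:ℝ) - 1) = 0 := by ring
    rw [h, h2]
    simp
  · -- C 1 w = w
    intro w hw
    rw [Set.mem_Icc] at hw
    rw [hC, hφ1]
    have h : ((1:ℝ) - 1) * (w - χ w) = 0 := by ring
    rw [h, min_eq_right (by nlinarith [hw.2])]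
    ring
  · -- 2-increasing
    intro u₁ u₂ w₁ w₂ h0u h12 hu2 h0w h34 hw2
    have hu1le : u₁ ≤ 1 := le_trans h12 hu2
    have hw1le : w₁ ≤ 1 := le_trans h34 hw2
    have h0u2 : 0 ≤ u₂ := le_trans h0u h12
    have h0w2 : 0 ≤ w₂ := le_trans h0w h34
    have key : ∀ u w : ℝ, C u w = u - max (u * (1 - w) - (φ u - u) * (w - χ w)) 0 := by
      intro u w
      rcases le_total (u * (1 - w)) ((φ u - u) * (w - χ w)) with h | h
      · rw [hC, min_eq_left h, max_eq_right (by linarith)]; ring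
      · rw [hC, min_eq_right h, max_eq_left (by linarith)]; ring
    rw [key, key, key, key]
    set A1 : ℝ := φ u₁ - u₁ with hA1
    set A2 : ℝ := φ u₂ - u₂ with hA2
    set B1 : ℝ := w₁ - χ w₁ with hB1
    set B2 : ℝ := w₂ - χ w₂ with hB2
    set S1 : ℝ := 1 - w₁ with hS1
    set S2 : ℝ := 1 - w₂ with hS2
    set D11 : ℝ := u₁ * S1 - A1 * B1 with hD11
    set D12 : ℝ := u₁ * S2 - A1 * B2 with hD12
    set D21 : ℝ := u₂ * S1 - A2 * B1 with hD21
    set D22 : ℝ := u₂ * S2 - A2 * B2 with hD22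
    suffices h : max D11 0 + max D22 0 ≤ max D12 0 + max D21 0 by linarith
    have ha1 : 0 ≤ A1 := by rw [hA1]; linarith [hφge u₁ h0u hu1le]
    have ha2 : 0 ≤ A2 := by rw [hA2]; linarith [hφge u₂ h0u2 hu2]
    have hb1 : 0 ≤ B1 := by
      rw [hB1]; linarith [hχle w₁ (Set.mem_Icc.mpr ⟨h0w, hw1le⟩)]
    have hb2 : 0 ≤ B2 := by
      rw [hB2]; linarith [hχle w₂ (Set.mem_Icc.mpr ⟨h0w2, hw2⟩)]
    have hs2nn : 0 ≤ S2 := by rw [hS2]; linarith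
    have hs21 : S2 ≤ S1 := by rw [hS1, hS2]; linarith
    have hs1le : S1 ≤ 1 := by rw [hS1]; linarith
    have hg2 : A2 * u₁ ≤ A1 * u₂ := by
      rw [hA1, hA2]; nlinarith [hφratio u₁ u₂ h0u h12 hu2]
    have hg5 : S2 * B1 ≤ S1 * B2 := by
      rw [hS1, hS2, hB1, hB2]; nlinarith [hχratio w₁ w₂ h0w h34 hw2]
    have hg3 : A1 + u₁ ≤ A2 + u₂ := by
      rw [hA1, hA2]
      have := hφmono (Set.mem_Icc.mpr ⟨h0u, hu1le⟩) (Set.mem_Icc.mpr ⟨h0u2, hu2⟩) h12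
      linarith
    have hg6 : S2 + B2 ≤ S1 + B1 := by
      rw [hS1, hS2, hB1, hB2]
      have := hχmono (Set.mem_Icc.mpr ⟨h0w, hw1le⟩) (Set.mem_Icc.mpr ⟨h0w2, hw2⟩) h34
      linarith
    have hK1 : u₂ * D11 ≤ u₁ * D21 := by
      rw [hD11, hD21]
      linarith [mul_le_mul_of_nonneg_right hg2 hb1]
    have hK2 : S1 * D22 ≤ S2 * D21 := by
      rw [hD22, hD21]
      linarith [mul_le_mul_of_nonneg_right hg5 ha2]
    rcases le_or_gt D11 0 with h11 | h11 <;> rcases le_or_gt D22 0 with h22 | h22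
    · -- both negative parts vanish
      rw [max_eq_right h11, max_eq_right h22]
      linarith [le_max_right D12 (0:ℝ), le_max_right D21 (0:ℝ)]
    · -- D11 ≤ 0 < D22
      have hu2S2 : (0:ℝ) < u₂ * S2 := by
        rw [hD22] at h22; nlinarith [mul_nonneg ha2 hb2]
      have hS2pos : (0:ℝ) < S2 :=
        lt_of_lt_of_le hu2S2 (mul_le_of_le_one_left hs2nn hu2)
      have hstep : S2 * D22 ≤ S2 * D21 :=
        le_trans (mul_le_mul_of_nonneg_right hs21 h22.le) hK2
      have h2221 : D22 ≤ D21 := le_of_mul_le_mul_left hstep hS2pos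
      rw [max_eq_right h11, max_eq_left h22.le]
      linarith [le_max_right D12 (0:ℝ), le_max_left D21 (0:ℝ)]
    · -- D22 ≤ 0 < D11
      have hu1S1 : (0:ℝ) < u₁ * S1 := by
        rw [hD11] at h11; nlinarith [mul_nonneg ha1 hb1]
      have hu1pos : (0:ℝ) < u₁ :=
        lt_of_lt_of_le hu1S1 (mul_le_of_le_one_right h0u hs1le)
      have hstep : u₁ * D11 ≤ u₁ * D21 :=
        le_trans (mul_le_mul_of_nonneg_right h12 h11.le) hK1
      have h1121 : D11 ≤ D21 := le_of_mul_le_mul_left hstep hu1pos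
      rw [max_eq_left h11.le, max_eq_right h22]
      linarith [le_max_right D12 (0:ℝ), le_max_left D21 (0:ℝ)]
    · -- 0 < D11, 0 < D22
      have hu1S1 : (0:ℝ) < u₁ * S1 := by
        rw [hD11] at h11; nlinarith [mul_nonneg ha1 hb1]
      have hu1pos : (0:ℝ) < u₁ :=
        lt_of_lt_of_le hu1S1 (mul_le_of_le_one_right h0u hs1le)
      have hu2S2 : (0:ℝ) < u₂ * S2 := by
        rw [hD22] at h22; nlinarith [mul_nonneg ha2 hb2]
      have hS2pos : (0:ℝ) < S2 :=
        lt_of_lt_of_le hu2S2 (mul_le_of_le_one_left hs2nn hu2)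
      have hstep : S2 * D22 ≤ S2 * D21 :=
        le_trans (mul_le_mul_of_nonneg_right hs21 h22.le) hK2
      have h2221 : D22 ≤ D21 := le_of_mul_le_mul_left hstep hS2pos
      have hD21pos : (0:ℝ) < D21 := lt_of_lt_of_le h22 h2221
      rw [max_eq_left h11.le, max_eq_left h22.le, max_eq_left hD21pos.le]
      rcases le_or_gt D12 0 with h12d | h12d
      · -- D12 ≤ 0 : certificate
        rw [max_eq_right h12d]
        have hg7 : 0 ≤ A1 * B2 - u₁ * S2 := by rw [hD12] at h12d; linarith
        have hP1 : 0 ≤ (A1 * B2 - u₁ * S2) * (u₁ * (S1 + B1)) :=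
          mul_nonneg hg7 (mul_nonneg h0u (by linarith))
        have hP2 : 0 ≤ ((A2 + u₂) - (A1 + u₁)) * ((A1 * B2 - u₁ * S2) * B1) :=
          mul_nonneg (by linarith) (mul_nonneg hg7 hb1)
        have hP3 : 0 ≤ ((A2 + u₂) - (A1 + u₁)) * ((u₁ * S1 - A1 * B1) * B2) := by
          rw [hD11] at h11
          exact mul_nonneg (by linarith) (mul_nonneg h11.le hb2)
        have hP4 : 0 ≤ ((S1 + B1) - (S2 + B2)) * ((u₂ * S2 - A2 * B2) * u₁) := by
          rw [hD22] at h22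
          exact mul_nonneg (by linarith) (mul_nonneg h22.le h0u)
        have hc : (0:ℝ) < u₁ * (S2 + B2) := mul_pos hu1pos (by linarith)
        have hmul : 0 * (u₁ * (S2 + B2)) ≤ (D21 - D11 - D22) * (u₁ * (S2 + B2)) := by
          rw [zero_mul, hD11, hD21, hD22]
          linarith [hP1, hP2, hP3, hP4]
        have := le_of_mul_le_mul_right hmul hc
        linarith
      · -- 0 < D12
        rw [max_eq_left h12d.le]
        have hg7' : A1 * B2 ≤ u₁ * S2 := by rw [hD12] at h12d; linarith
        rcases le_total A1 A2 with hA | hA <;> rcases le_total B2 B1 with hB | hB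
        · -- A1 ≤ A2, B2 ≤ B1 : hard subcase, certificate with u₁S2 multiplier
          have h2' : (A2 - A1) * u₁ ≤ A1 * (u₂ - u₁) := by nlinarith [hg2]
          have h5' : (B1 - B2) * S2 ≤ B2 * (S1 - S2) := by nlinarith [hg5]
          have hQ1 : ((A2 - A1) * u₁) * ((B1 - B2) * S2) ≤
              (A1 * (u₂ - u₁)) * (B2 * (S1 - S2)) :=
            mul_le_mul h2' h5' (mul_nonneg (by linarith) hs2nn)
              (mul_nonneg ha1 (by linarith))
          have hQ2 : (A1 * B2) * ((u₂ - u₁) * (S1 - S2)) ≤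
              (u₁ * S2) * ((u₂ - u₁) * (S1 - S2)) :=
            mul_le_mul_of_nonneg_right hg7'
              (mul_nonneg (by linarith) (by linarith))
          have hc : (0:ℝ) < u₁ * S2 := mul_pos hu1pos hS2pos
          have hmul : 0 * (u₁ * S2) ≤ (D12 + D21 - D11 - D22) * (u₁ * S2) := by
            rw [zero_mul, hD11, hD12, hD21, hD22]
            linarith [hQ1, hQ2]
          have := le_of_mul_le_mul_right hmul hc
          linarith
        · -- A1 ≤ A2, B1 ≤ B2
          rw [hD11, hD12, hD21, hD22]
          linarith [mul_nonneg (sub_nonneg.mpr hA) (sub_nonneg.mpr hB),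
            mul_nonneg (sub_nonneg.mpr h12) (sub_nonneg.mpr hs21)]
        · -- A2 ≤ A1, B2 ≤ B1
          rw [hD11, hD12, hD21, hD22]
          linarith [mul_nonneg (sub_nonneg.mpr hA) (sub_nonneg.mpr hB),
            mul_nonneg (sub_nonneg.mpr h12) (sub_nonneg.mpr hs21)]
        · -- A2 ≤ A1, B1 ≤ B2 : use monotonicity bounds
          have h3' : A1 - A2 ≤ u₂ - u₁ := by linarith
          have h6' : B2 - B1 ≤ S1 - S2 := by linarith
          have hQ : (A1 - A2) * (B2 - B1) ≤ (u₂ - u₁) * (S1 - S2) :=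
            mul_le_mul h3' h6' (by linarith) (by linarith)
          rw [hD11, hD12, hD21, hD22]
          linarith [hQ, mul_nonneg (sub_nonneg.mpr h12) (sub_nonneg.mpr hs21)]
end

section
/- Let F_Y, F_Z : ℝ → [0,1] be nondecreasing and set K = F_Y + F_Z − F_Y·F_Z. Let X be a nonempty set of functions χ : [0,1] → [0,1], each of which is nondecreasing, satisfies χ(0) = 0, χ(1) = 1, χ(w) ≤ w for all w, (1−χ(w))·(w'−χ(w')) ≥ (1−χ(w'))·(w−χ(w)) whenever 0 ≤ w ≤ w' ≤ 1, and χ(K(y)) = F_Y(y) for every y with K(y) < 1. Then the pointwise infimum χ_min(w) = inf{χ(w) : χ ∈ X} and the pointwise supremum χ_max(w) = sup{χ(w) : χ ∈ X} both satisfy all of these properties. -/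
/-- A generating function χ associated to the pair (F_Y, F_Z): nondecreasing on [0,1],
mapping [0,1] into [0,1], with χ(0)=0, χ(1)=1, χ(w) ≤ w, (1-χ(w))/(w-χ(w)) nonincreasing
(in product form), and χ(K(y)) = F_Y(y) whenever K(y) := F_Y(y)+F_Z(y)-F_Y(y)·F_Z(y) < 1. -/
def IsAssociatedMaxmin (FY FZ : ℝ → ℝ) (χ : ℝ → ℝ) : Prop :=
  MonotoneOn χ (Set.Icc 0 1) ∧
  (∀ w ∈ Set.Icc (0:ℝ) 1, χ w ∈ Set.Icc (0:ℝ) 1) ∧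
  χ 0 = 0 ∧ χ 1 = 1 ∧
  (∀ w ∈ Set.Icc (0:ℝ) 1, χ w ≤ w) ∧
  (∀ w w' : ℝ, 0 ≤ w → w ≤ w' → w' ≤ 1 →
    (1 - χ w') * (w - χ w) ≤ (1 - χ w) * (w' - χ w')) ∧
  (∀ y : ℝ, FY y + FZ y - FY y * FZ y < 1 → χ (FY y + FZ y - FY y * FZ y) = FY y)

/-- The pointwise infimum and supremum of a nonempty family of generating
functions associated to (F_Y, F_Z) are again associated to (F_Y, F_Z). -/
theorem inf_sup_associated_maxmin
    (FY FZ : ℝ → ℝ)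
    (hFYmono : Monotone FY) (hFZmono : Monotone FZ)
    (hFY01 : ∀ y : ℝ, FY y ∈ Set.Icc (0:ℝ) 1)
    (hFZ01 : ∀ y : ℝ, FZ y ∈ Set.Icc (0:ℝ) 1)
    (X : Set (ℝ → ℝ)) (hne : X.Nonempty)
    (hX : ∀ χ ∈ X, IsAssociatedMaxmin FY FZ χ) :
    IsAssociatedMaxmin FY FZ (fun w => sInf ((fun χ : ℝ → ℝ => χ w) '' X)) ∧
    IsAssociatedMaxmin FY FZ (fun w => sSup ((fun χ : ℝ → ℝ => χ w) '' X)) := by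
  obtain ⟨χ₀, hχ₀⟩ := hne
  set S : ℝ → Set ℝ := fun w => (fun χ : ℝ → ℝ => χ w) '' X with hS
  have hnem : ∀ w, (S w).Nonempty := fun w => ⟨χ₀ w, ⟨χ₀, hχ₀, rfl⟩⟩
  have hbl : ∀ w ∈ Set.Icc (0:ℝ) 1, (0:ℝ) ∈ lowerBounds (S w) := by
    rintro w hw x ⟨χ, hχ, rfl⟩
    exact ((hX χ hχ).2.1 w hw).1
  have hbu : ∀ w ∈ Set.Icc (0:ℝ) 1, (1:ℝ) ∈ upperBounds (S w) := by
    rintro w hw x ⟨χ, hχ, rfl⟩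
    exact ((hX χ hχ).2.1 w hw).2
  have hBddB : ∀ w ∈ Set.Icc (0:ℝ) 1, BddBelow (S w) := fun w hw => ⟨0, hbl w hw⟩
  have hBddA : ∀ w ∈ Set.Icc (0:ℝ) 1, BddAbove (S w) := fun w hw => ⟨1, hbu w hw⟩
  have hInf_le : ∀ w ∈ Set.Icc (0:ℝ) 1, ∀ χ ∈ X, sInf (S w) ≤ χ w := by
    intro w hw χ hχ
    exact csInf_le (hBddB w hw) ⟨χ, hχ, rfl⟩
  have hle_Sup : ∀ w ∈ Set.Icc (0:ℝ) 1, ∀ χ ∈ X, χ w ≤ sSup (S w) := by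
    intro w hw χ hχ
    exact le_csSup (hBddA w hw) ⟨χ, hχ, rfl⟩
  have hInf_nonneg : ∀ w ∈ Set.Icc (0:ℝ) 1, 0 ≤ sInf (S w) :=
    fun w hw => le_csInf (hnem w) (hbl w hw)
  have hSup_le_one : ∀ w ∈ Set.Icc (0:ℝ) 1, sSup (S w) ≤ 1 :=
    fun w hw => csSup_le (hnem w) (hbu w hw)
  -- singleton images at 0, 1, K(y)
  have hsingK : ∀ y : ℝ, FY y + FZ y - FY y * FZ y < 1 →
      S (FY y + FZ y - FY y * FZ y) = {FY y} := by
    intro y hy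
    apply Set.eq_singleton_iff_nonempty_unique_mem.mpr
    refine ⟨hnem _, ?_⟩
    rintro x ⟨χ, hχ, rfl⟩
    exact (hX χ hχ).2.2.2.2.2.2 y hy
  have hsing0 : S 0 = {0} := by
    apply Set.eq_singleton_iff_nonempty_unique_mem.mpr
    refine ⟨hnem _, ?_⟩
    rintro x ⟨χ, hχ, rfl⟩
    exact (hX χ hχ).2.2.1
  have hsing1 : S 1 = {1} := by
    apply Set.eq_singleton_iff_nonempty_unique_mem.mpr
    refine ⟨hnem _, ?_⟩
    rintro x ⟨χ, hχ, rfl⟩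
    exact (hX χ hχ).2.2.2.1
  constructor
  · -- infimum
    refine ⟨?_, ?_, ?_, ?_, ?_, ?_, ?_⟩
    · -- monotone
      intro w hw w' hw' hww'
      apply le_csInf (hnem w')
      rintro x ⟨χ, hχ, rfl⟩
      exact le_trans (hInf_le w hw χ hχ) ((hX χ hχ).1 hw hw' hww')
    · intro w hw
      exact ⟨hInf_nonneg w hw,
        le_trans (hInf_le w hw χ₀ hχ₀) ((hX χ₀ hχ₀).2.1 w hw).2⟩
    · show sInf (S 0) = 0
      rw [hsing0]; exact csInf_singleton 0
    · show sInf (S 1) = 1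
      rw [hsing1]; exact csInf_singleton 1
    · intro w hw
      exact le_trans (hInf_le w hw χ₀ hχ₀) ((hX χ₀ hχ₀).2.2.2.2.1 w hw)
    · intro w w' hw0 hww' hw'1
      have hw1 : w ≤ 1 := le_trans hww' hw'1
      have hw'0 : 0 ≤ w' := le_trans hw0 hww'
      have hwI : w ∈ Set.Icc (0:ℝ) 1 := ⟨hw0, hw1⟩
      have hw'I : w' ∈ Set.Icc (0:ℝ) 1 := ⟨hw'0, hw'1⟩
      show (1 - sInf (S w')) * (w - sInf (S w)) ≤ (1 - sInf (S w)) * (w' - sInf (S w'))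
      apply le_of_forall_pos_le_add
      intro ε hε
      obtain ⟨x, hxS, hxlt⟩ := exists_lt_of_csInf_lt (hnem w)
        (lt_add_of_pos_right (sInf (S w)) hε)
      obtain ⟨χ, hχ, rfl⟩ := hxS
      have hA : sInf (S w) ≤ χ w := hInf_le w hwI χ hχ
      have hB : sInf (S w') ≤ χ w' := hInf_le w' hw'I χ hχ
      have hkey := (hX χ hχ).2.2.2.2.2.1 w w' hw0 hww' hw'1
      nlinarith [mul_nonneg (sub_nonneg.mpr hB) (by linarith : (0:ℝ) ≤ 1 - w),
        mul_nonneg (by linarith : (0:ℝ) ≤ sInf (S w) + ε - χ w)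
          (by linarith : (0:ℝ) ≤ 1 - w'),
        mul_nonneg hε.le hw'0]
    · intro y hy
      show sInf (S (FY y + FZ y - FY y * FZ y)) = FY y
      rw [hsingK y hy]; exact csInf_singleton _
  · -- supremum
    refine ⟨?_, ?_, ?_, ?_, ?_, ?_, ?_⟩
    · intro w hw w' hw' hww'
      apply csSup_le (hnem w)
      rintro x ⟨χ, hχ, rfl⟩
      exact le_trans ((hX χ hχ).1 hw hw' hww') (hle_Sup w' hw' χ hχ)
    · intro w hw
      exact ⟨le_trans ((hX χ₀ hχ₀).2.1 w hw).1 (hle_Sup w hw χ₀ hχ₀),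
        hSup_le_one w hw⟩
    · show sSup (S 0) = 0
      rw [hsing0]; exact csSup_singleton 0
    · show sSup (S 1) = 1
      rw [hsing1]; exact csSup_singleton 1
    · intro w hw
      apply csSup_le (hnem w)
      rintro x ⟨χ, hχ, rfl⟩
      exact (hX χ hχ).2.2.2.2.1 w hw
    · intro w w' hw0 hww' hw'1
      have hw1 : w ≤ 1 := le_trans hww' hw'1
      have hw'0 : 0 ≤ w' := le_trans hw0 hww'
      have hwI : w ∈ Set.Icc (0:ℝ) 1 := ⟨hw0, hw1⟩
      have hw'I : w' ∈ Set.Icc (0:ℝ) 1 := ⟨hw'0, hw'1⟩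
      show (1 - sSup (S w')) * (w - sSup (S w)) ≤ (1 - sSup (S w)) * (w' - sSup (S w'))
      apply le_of_forall_pos_le_add
      intro ε hε
      obtain ⟨x, hxS, hxgt⟩ := exists_lt_of_lt_csSup (hnem w')
        (by linarith [hε] : sSup (S w') - ε < sSup (S w'))
      obtain ⟨χ, hχ, rfl⟩ := hxS
      have hA : χ w ≤ sSup (S w) := hle_Sup w hwI χ hχ
      have hB : χ w' ≤ sSup (S w') := hle_Sup w' hw'I χ hχ
      have hkey := (hX χ hχ).2.2.2.2.2.1 w w' hw0 hww' hw'1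
      nlinarith [mul_nonneg (sub_nonneg.mpr hA) (by linarith : (0:ℝ) ≤ 1 - w'),
        mul_nonneg (by linarith : (0:ℝ) ≤ χ w' + ε - sSup (S w'))
          (by linarith : (0:ℝ) ≤ 1 - w),
        mul_nonneg hε.le hw0]
    · intro y hy
      show sSup (S (FY y + FZ y - FY y * FZ y)) = FY y
      rw [hsingK y hy]; exact csSup_singleton _
end

section
/- Let φ̲, φ̄, ψ̲, ψ̄ be Marshall generators with φ̲ ≤ φ̄ and ψ̲ ≤ ψ̄ pointwise, and set C̲ = C^M_{φ̲,ψ̲} and C̄ = C^M_{φ̄,ψ̄}. Then the imprecise copula (C̲, C̄) is coherent: for every (u,v) ∈ [0,1]², the infimum of C(u,v) over all copulas C with C̲ ≤ C ≤ C̄ equals C̲(u,v), and the supremum of C(u,v) over all copulas C with C̲ ≤ C ≤ C̄ equals C̄(u,v). -/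
/-- A (bivariate) copula on [0,1]². -/
def IsCopula (C : ℝ → ℝ → ℝ) : Prop :=
  (∀ u ∈ Set.Icc (0:ℝ) 1, ∀ v ∈ Set.Icc (0:ℝ) 1, C u v ∈ Set.Icc (0:ℝ) 1) ∧
  (∀ u ∈ Set.Icc (0:ℝ) 1, C u 0 = 0) ∧
  (∀ v ∈ Set.Icc (0:ℝ) 1, C 0 v = 0) ∧
  (∀ u ∈ Set.Icc (0:ℝ) 1, C u 1 = u) ∧
  (∀ v ∈ Set.Icc (0:ℝ) 1, C 1 v = v) ∧
  (∀ u₁ u₂ v₁ v₂ : ℝ, 0 ≤ u₁ → u₁ ≤ u₂ → u₂ ≤ 1 → 0 ≤ v₁ → v₁ ≤ v₂ → v₂ ≤ 1 →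
    0 ≤ C u₂ v₂ - C u₁ v₂ - C u₂ v₁ + C u₁ v₁)

/-- A Marshall generator. -/
def IsMarshallGen (φ : ℝ → ℝ) : Prop :=
  MonotoneOn φ (Set.Icc 0 1) ∧
  (∀ u ∈ Set.Icc (0:ℝ) 1, φ u ∈ Set.Icc (0:ℝ) 1) ∧
  φ 0 = 0 ∧ φ 1 = 1 ∧
  (∀ u u' : ℝ, 0 ≤ u → u ≤ u' → u' ≤ 1 → φ u' * u ≤ φ u * u')

/-- The Marshall copula of generators φ, ψ. -/
noncomputable def marshallCopula (φ ψ : ℝ → ℝ) : ℝ → ℝ → ℝ :=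
  fun u v => min (φ u * v) (ψ v * u)

lemma marshall_comm (φ ψ : ℝ → ℝ) (u v : ℝ) :
    marshallCopula ψ φ v u = marshallCopula φ ψ u v := by
  simp [marshallCopula, min_comm]

lemma vol_aux (φ ψ : ℝ → ℝ) (hφ : IsMarshallGen φ) (hψ : IsMarshallGen ψ)
    (u₁ u₂ v₁ v₂ : ℝ) (hu1 : 0 ≤ u₁) (hu12 : u₁ ≤ u₂) (hu2 : u₂ ≤ 1)
    (hv1 : 0 ≤ v₁) (hv12 : v₁ ≤ v₂) (hv2 : v₂ ≤ 1) (hv2pos : 0 < v₂)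
    (hcase : φ u₂ * v₂ ≤ ψ v₂ * u₂) :
    0 ≤ marshallCopula φ ψ u₂ v₂ - marshallCopula φ ψ u₁ v₂ -
        marshallCopula φ ψ u₂ v₁ + marshallCopula φ ψ u₁ v₁ := by
  obtain ⟨φmono, φrange, φ0, φ1, φcond⟩ := hφ
  obtain ⟨ψmono, ψrange, ψ0, ψ1, ψcond⟩ := hψ
  have hA : ψ v₂ * v₁ ≤ ψ v₁ * v₂ := ψcond v₁ v₂ hv1 hv12 hv2
  have hu2' : 0 ≤ u₂ := le_trans hu1 hu12
  have hφmono : φ u₁ ≤ φ u₂ :=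
    φmono ⟨hu1, le_trans hu12 hu2⟩ ⟨hu2', hu2⟩ hu12
  -- top-right and bottom-right corners are on the φ branch
  have h1 : marshallCopula φ ψ u₂ v₂ = φ u₂ * v₂ := min_eq_left hcase
  have h2 : marshallCopula φ ψ u₂ v₁ = φ u₂ * v₁ := by
    apply min_eq_left
    nlinarith [mul_le_mul_of_nonneg_right hcase hv1,
      mul_le_mul_of_nonneg_right hA hu2']
  rw [h1, h2]
  -- it suffices that C(u₁,v₂) - C(u₁,v₁) ≤ φ u₂ * (v₂ - v₁)
  rcases le_total (φ u₁ * v₂) (ψ v₂ * u₁) with hb | hb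
  · -- φ branch at (u₁, v₂); then also φ branch at (u₁, v₁)
    have h3 : marshallCopula φ ψ u₁ v₂ = φ u₁ * v₂ := min_eq_left hb
    have h4 : marshallCopula φ ψ u₁ v₁ = φ u₁ * v₁ := by
      apply min_eq_left
      nlinarith [mul_le_mul_of_nonneg_right hb hv1,
        mul_le_mul_of_nonneg_right hA hu1]
    rw [h3, h4]
    nlinarith [mul_le_mul_of_nonneg_right hφmono (sub_nonneg.mpr hv12)]
  · -- ψ branch at (u₁, v₂)
    have h3 : marshallCopula φ ψ u₁ v₂ = ψ v₂ * u₁ := min_eq_right hb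
    rw [h3]
    rcases le_total (φ u₁ * v₁) (ψ v₁ * u₁) with hc | hc
    · have h4 : marshallCopula φ ψ u₁ v₁ = φ u₁ * v₁ := min_eq_left hc
      rw [h4]
      nlinarith [mul_le_mul_of_nonneg_right hφmono (sub_nonneg.mpr hv12)]
    · have h4 : marshallCopula φ ψ u₁ v₁ = ψ v₁ * u₁ := min_eq_right hc
      rw [h4]
      have key : (ψ v₂ - ψ v₁) * u₁ * v₂ ≤ φ u₁ * (v₂ - v₁) * v₂ := by
        nlinarith [mul_le_mul_of_nonneg_left hA hu1,
          mul_le_mul_of_nonneg_right hb (sub_nonneg.mpr hv12)]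
      have key2 : (ψ v₂ - ψ v₁) * u₁ ≤ φ u₁ * (v₂ - v₁) :=
        le_of_mul_le_mul_right (by linarith [key]) hv2pos
      nlinarith [mul_le_mul_of_nonneg_right hφmono (sub_nonneg.mpr hv12)]

lemma marshall_isCopula (φ ψ : ℝ → ℝ) (hφ : IsMarshallGen φ) (hψ : IsMarshallGen ψ) :
    IsCopula (marshallCopula φ ψ) := by
  obtain ⟨φmono, φrange, φ0, φ1, φcond⟩ := hφ
  obtain ⟨ψmono, ψrange, ψ0, ψ1, ψcond⟩ := hψ
  refine ⟨?_, ?_, ?_, ?_, ?_, ?_⟩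
  · intro u hu v hv
    have h1 := φrange u hu
    have h2 := ψrange v hv
    constructor
    · exact le_min (mul_nonneg h1.1 hv.1) (mul_nonneg h2.1 hu.1)
    · exact le_trans (min_le_left _ _) (by nlinarith [h1.2, hv.2, hv.1, h1.1])
  · intro u hu; simp [marshallCopula, ψ0]
  · intro v hv; simp [marshallCopula, φ0]
  · intro u hu
    have h := φcond u 1 hu.1 hu.2 le_rfl
    rw [φ1] at h
    simp only [marshallCopula, ψ1, mul_one, one_mul]
    exact min_eq_right (by linarith)
  · intro v hv
    have h := ψcond v 1 hv.1 hv.2 le_rfl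
    rw [ψ1] at h
    simp only [marshallCopula, φ1, mul_one, one_mul]
    exact min_eq_left (by linarith)
  · intro u₁ u₂ v₁ v₂ hu1 hu12 hu2 hv1 hv12 hv2
    rcases eq_or_lt_of_le (le_trans hv1 hv12) with hv0 | hv2pos
    · have h0 : v₁ = 0 := by linarith
      rw [h0, ← hv0]; ring_nf; simp
    rcases eq_or_lt_of_le (le_trans hu1 hu12) with hu0 | hu2pos
    · have h0 : u₁ = 0 := by linarith
      rw [h0, ← hu0]; ring_nf; simp
    rcases le_total (φ u₂ * v₂) (ψ v₂ * u₂) with hc | hc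
    · exact vol_aux φ ψ ⟨φmono, φrange, φ0, φ1, φcond⟩ ⟨ψmono, ψrange, ψ0, ψ1, ψcond⟩
        u₁ u₂ v₁ v₂ hu1 hu12 hu2 hv1 hv12 hv2 hv2pos hc
    · have := vol_aux ψ φ ⟨ψmono, ψrange, ψ0, ψ1, ψcond⟩ ⟨φmono, φrange, φ0, φ1, φcond⟩
        v₁ v₂ u₁ u₂ hv1 hv12 hv2 hu1 hu12 hu2 hu2pos hc
      simp only [marshall_comm] at this
      linarith

lemma marshall_mono (φl φh ψl ψh : ℝ → ℝ)
    (hφ : ∀ u ∈ Set.Icc (0:ℝ) 1, φl u ≤ φh u)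
    (hψ : ∀ v ∈ Set.Icc (0:ℝ) 1, ψl v ≤ ψh v) :
    ∀ u ∈ Set.Icc (0:ℝ) 1, ∀ v ∈ Set.Icc (0:ℝ) 1,
      marshallCopula φl ψl u v ≤ marshallCopula φh ψh u v := by
  intro u hu v hv
  exact min_le_min (mul_le_mul_of_nonneg_right (hφ u hu) hv.1)
    (mul_le_mul_of_nonneg_right (hψ v hv) hu.1)

/-- The imprecise Marshall copula (C^M_{φ̲,ψ̲}, C^M_{φ̄,ψ̄}) is coherent. -/
theorem imprecise_marshall_coherent
    (φl φh ψl ψh : ℝ → ℝ)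
    (hφl : IsMarshallGen φl) (hφh : IsMarshallGen φh)
    (hψl : IsMarshallGen ψl) (hψh : IsMarshallGen ψh)
    (hφ : ∀ u ∈ Set.Icc (0:ℝ) 1, φl u ≤ φh u)
    (hψ : ∀ v ∈ Set.Icc (0:ℝ) 1, ψl v ≤ ψh v) :
    ∀ u ∈ Set.Icc (0:ℝ) 1, ∀ v ∈ Set.Icc (0:ℝ) 1,
      sInf {c : ℝ | ∃ C : ℝ → ℝ → ℝ, IsCopula C ∧
          (∀ u' ∈ Set.Icc (0:ℝ) 1, ∀ v' ∈ Set.Icc (0:ℝ) 1,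
            marshallCopula φl ψl u' v' ≤ C u' v' ∧
            C u' v' ≤ marshallCopula φh ψh u' v') ∧
          c = C u v} = marshallCopula φl ψl u v ∧
      sSup {c : ℝ | ∃ C : ℝ → ℝ → ℝ, IsCopula C ∧
          (∀ u' ∈ Set.Icc (0:ℝ) 1, ∀ v' ∈ Set.Icc (0:ℝ) 1,
            marshallCopula φl ψl u' v' ≤ C u' v' ∧
            C u' v' ≤ marshallCopula φh ψh u' v') ∧
          c = C u v} = marshallCopula φh ψh u v := by
  intro u hu v hv
  have hle := marshall_mono φl φh ψl ψh hφ hψ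
  set S : Set ℝ := {c : ℝ | ∃ C : ℝ → ℝ → ℝ, IsCopula C ∧
      (∀ u' ∈ Set.Icc (0:ℝ) 1, ∀ v' ∈ Set.Icc (0:ℝ) 1,
        marshallCopula φl ψl u' v' ≤ C u' v' ∧
        C u' v' ≤ marshallCopula φh ψh u' v') ∧
      c = C u v} with hS
  have hmeml : marshallCopula φl ψl u v ∈ S :=
    ⟨marshallCopula φl ψl, marshall_isCopula φl ψl hφl hψl,
      fun u' hu' v' hv' => ⟨le_rfl, hle u' hu' v' hv'⟩, rfl⟩
  have hmemh : marshallCopula φh ψh u v ∈ S :=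
    ⟨marshallCopula φh ψh, marshall_isCopula φh ψh hφh hψh,
      fun u' hu' v' hv' => ⟨hle u' hu' v' hv', le_rfl⟩, rfl⟩
  have hlb : ∀ c ∈ S, marshallCopula φl ψl u v ≤ c := by
    rintro c ⟨C, _, hb, rfl⟩
    exact (hb u hu v hv).1
  have hub : ∀ c ∈ S, c ≤ marshallCopula φh ψh u v := by
    rintro c ⟨C, _, hb, rfl⟩
    exact (hb u hu v hv).2
  constructor
  · exact le_antisymm (csInf_le ⟨_, hlb⟩ hmeml) (le_csInf ⟨_, hmeml⟩ hlb)
  · exact le_antisymm (csSup_le ⟨_, hmemh⟩ hub) (le_csSup ⟨_, hub⟩ hmemh)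
end

section
/- Let φ̲, φ̄ be Marshall generators with φ̲ ≤ φ̄ pointwise and χ̲, χ̄ be maxmin second generators with χ̲ ≤ χ̄ pointwise, and set C̲ = C^MM_{φ̲,χ̄} and C̄ = C^MM_{φ̄,χ̲}. Then the imprecise copula (C̲, C̄) is coherent: for every (u,w) ∈ [0,1]², the infimum of C(u,w) over all copulas C with C̲ ≤ C ≤ C̄ equals C̲(u,w), and the supremum of C(u,w) over all copulas C with C̲ ≤ C ≤ C̄ equals C̄(u,w). -/
set_option maxHeartbeats 1000000




/-- A maxmin second generator. -/
def IsMaxminGen (χ : ℝ → ℝ) : Prop :=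
  MonotoneOn χ (Set.Icc 0 1) ∧
  (∀ w ∈ Set.Icc (0:ℝ) 1, χ w ∈ Set.Icc (0:ℝ) 1) ∧
  χ 0 = 0 ∧ χ 1 = 1 ∧
  (∀ w ∈ Set.Icc (0:ℝ) 1, χ w ≤ w) ∧
  (∀ w w' : ℝ, 0 ≤ w → w ≤ w' → w' ≤ 1 →
    (1 - χ w') * (w - χ w) ≤ (1 - χ w) * (w' - χ w'))

/-- The maxmin copula of generators φ, χ. -/
noncomputable def maxminCopula (φ χ : ℝ → ℝ) : ℝ → ℝ → ℝ :=
  fun u w => u * w + min (u * (1 - w)) ((φ u - u) * (w - χ w))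

/-- Key algebraic inequality: bound on `(p2-p1)(k1-k2)`. -/
lemma maxmin_key (u1 u2 w1 w2 p1 p2 k1 k2 : ℝ)
    (hu1 : 0 ≤ u1) (hu12 : u1 ≤ u2)
    (hw1 : 0 ≤ w1) (hw12 : w1 ≤ w2) (hw2 : w2 ≤ 1)
    (hp1 : 0 ≤ p1) (hp2 : 0 ≤ p2)
    (hk1 : 0 ≤ k1) (hk2 : 0 ≤ k2)
    (hs1 : p2 * u1 ≤ p1 * u2)
    (hs2 : k1 * (1 - w2) ≤ k2 * (1 - w1))
    (hmp : p1 + u1 ≤ p2 + u2)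
    (hmk : w1 - k1 ≤ w2 - k2)
    (h11 : p1 * k1 ≤ u1 * (1 - w1))
    (h21 : p2 * k1 ≤ u2 * (1 - w1)) :
    (p2 - p1) * (k1 - k2) ≤ (u2 - u1) * (w2 - w1) := by
  have hw1' : (0:ℝ) ≤ 1 - w1 := by linarith
  have hΔu : (0:ℝ) ≤ u2 - u1 := by linarith
  have hΔw : (0:ℝ) ≤ w2 - w1 := by linarith
  rcases le_total p1 p2 with hp | hp
  · rcases le_total k2 k1 with hk | hk
    · -- main case : p1 ≤ p2, k2 ≤ k1
      -- first handle p1 * k1 = 0 possibilities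
      rcases (mul_nonneg hu1 hw1').lt_or_eq with hpos | hzero
      · have h4 : ((p2 - p1) * u1) * ((k1 - k2) * (1 - w1))
            ≤ (p1 * (u2 - u1)) * (k1 * (w2 - w1)) := by
          apply mul_le_mul (by nlinarith) (by nlinarith)
          · exact mul_nonneg (by linarith) hw1'
          · exact mul_nonneg hp1 hΔu
        have h5 : (p1 * k1) * ((u2 - u1) * (w2 - w1))
            ≤ (u1 * (1 - w1)) * ((u2 - u1) * (w2 - w1)) :=
          mul_le_mul_of_nonneg_right h11 (mul_nonneg hΔu hΔw)
        have h6 : 0 ≤ ((u2 - u1) * (w2 - w1) - (p2 - p1) * (k1 - k2)) * (u1 * (1 - w1)) := by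
          nlinarith [h4, h5]
        have := (mul_nonneg_iff_of_pos_right hpos).mp h6
        linarith
      · -- u1 * (1-w1) = 0, so p1 * k1 = 0
        have hpk : p1 * k1 = 0 := le_antisymm (by linarith [h11, hzero]) (mul_nonneg hp1 hk1)
        rcases mul_eq_zero.mp hpk with hp0 | hk0
        · -- p1 = 0
          have h7 : 0 ≤ (u2 * (w2 - w1) - p2 * (k1 - k2)) * (1 - w1) := by
            nlinarith [mul_le_mul_of_nonneg_left hs2 hp2,
              mul_le_mul_of_nonneg_right h21 hΔw]
          rcases hw1'.lt_or_eq with hw1pos | hw1z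
          · have := (mul_nonneg_iff_of_pos_right hw1pos).mp h7
            nlinarith [mul_nonneg hp1 (sub_nonneg.2 hk)]
          · -- w1 = 1, hence w2 = 1
            have hw1e : w1 = 1 := by linarith
            have hw2e : w2 = 1 := by linarith
            have hpk2 : p2 * k1 = 0 := le_antisymm (by nlinarith [h21]) (mul_nonneg hp2 hk1)
            rcases mul_eq_zero.mp hpk2 with h | h
            · rw [hp0, h]; nlinarith [mul_nonneg hΔu hΔw]
            · have hk2z : k2 = 0 := by linarith [h, hmk, hw1e, hw2e]
              rw [h, hk2z]; nlinarith
        · -- k1 = 0, hence k2 = 0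
          have hk2z : k2 = 0 := le_antisymm (by linarith [hk, hk0]) hk2
          rw [hk0, hk2z]; nlinarith
    · nlinarith [mul_nonneg (sub_nonneg.2 hp) (sub_nonneg.2 hk), mul_nonneg hΔu hΔw]
  · rcases le_total k2 k1 with hk | hk
    · nlinarith [mul_nonneg (sub_nonneg.2 hp) (sub_nonneg.2 hk), mul_nonneg hΔu hΔw]
    · nlinarith [mul_le_mul (by linarith : p1 - p2 ≤ u2 - u1)
        (by linarith : k2 - k1 ≤ w2 - w1) (by linarith) hΔu]

lemma vol_nonneg (u1 u2 w1 w2 p1 p2 k1 k2 : ℝ)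
    (hu1 : 0 ≤ u1) (hu12 : u1 ≤ u2) (hu2 : u2 ≤ 1)
    (hw1 : 0 ≤ w1) (hw12 : w1 ≤ w2) (hw2 : w2 ≤ 1)
    (hp1 : 0 ≤ p1) (hp2 : 0 ≤ p2)
    (hk1 : 0 ≤ k1) (hk2 : 0 ≤ k2)
    (hs1 : p2 * u1 ≤ p1 * u2)
    (hs2 : k1 * (1 - w2) ≤ k2 * (1 - w1))
    (hmp : p1 + u1 ≤ p2 + u2)
    (hmk : w1 - k1 ≤ w2 - k2) :
    0 ≤ (u2*w2 + min (u2*(1-w2)) (p2*k2)) - (u1*w2 + min (u1*(1-w2)) (p1*k2))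
      - (u2*w1 + min (u2*(1-w1)) (p2*k1)) + (u1*w1 + min (u1*(1-w1)) (p1*k1)) := by
  have hΔu : (0:ℝ) ≤ u2 - u1 := by linarith
  have hΔw : (0:ℝ) ≤ w2 - w1 := by linarith
  rcases le_total (u1*(1-w1)) (p1*k1) with h11 | h11 <;>
    (first | rw [min_eq_left h11] | rw [min_eq_right h11])
  · -- corner 11 in region 1 : easy cases
    rcases le_total (u1*(1-w2)) (p1*k2) with h12 | h12 <;>
      (first | rw [min_eq_left h12] | rw [min_eq_right h12]) <;>
    rcases le_total (u2*(1-w1)) (p2*k1) with h21 | h21 <;>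
      (first | rw [min_eq_left h21] | rw [min_eq_right h21]) <;>
    rcases le_total (u2*(1-w2)) (p2*k2) with h22 | h22 <;>
      (first | rw [min_eq_left h22] | rw [min_eq_right h22]) <;>
    nlinarith [mul_nonneg (sub_nonneg.2 hs1) (sub_nonneg.2 hs2),
      mul_le_mul_of_nonneg_right h11 hΔu, mul_le_mul_of_nonneg_right h11 hΔw,
      mul_le_mul_of_nonneg_right h21 hΔw, mul_le_mul_of_nonneg_right h12 hΔu,
      mul_le_mul_of_nonneg_right h22 hΔw,
      mul_nonneg (sub_nonneg.2 hs1) hk1, mul_nonneg (sub_nonneg.2 hs1) hk2,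
      mul_nonneg (sub_nonneg.2 hs2) hp1, mul_nonneg (sub_nonneg.2 hs2) hp2,
      mul_nonneg hp1 hk1, mul_nonneg hp2 hk2, mul_nonneg hp1 hk2, mul_nonneg hp2 hk1,
      mul_nonneg hu1 hw1, mul_nonneg hΔu hΔw]
  · rcases le_total (u2*(1-w1)) (p2*k1) with h21 | h21 <;>
      (first | rw [min_eq_left h21] | rw [min_eq_right h21])
    · -- corner 11 region 2, corner 21 region 1
      rcases le_total (u1*(1-w2)) (p1*k2) with h12 | h12 <;>
        (first | rw [min_eq_left h12] | rw [min_eq_right h12]) <;>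
      rcases le_total (u2*(1-w2)) (p2*k2) with h22 | h22 <;>
        (first | rw [min_eq_left h22] | rw [min_eq_right h22]) <;>
      nlinarith [mul_nonneg (sub_nonneg.2 hs1) (sub_nonneg.2 hs2),
        mul_le_mul_of_nonneg_right h11 hΔu, mul_le_mul_of_nonneg_right h11 hΔw,
        mul_le_mul_of_nonneg_right h21 hΔw, mul_le_mul_of_nonneg_right h12 hΔu,
        mul_le_mul_of_nonneg_right h22 hΔw,
        mul_nonneg (sub_nonneg.2 hs1) hk1, mul_nonneg (sub_nonneg.2 hs1) hk2,
        mul_nonneg (sub_nonneg.2 hs2) hp1, mul_nonneg (sub_nonneg.2 hs2) hp2,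
        mul_nonneg hp1 hk1, mul_nonneg hp2 hk2, mul_nonneg hp1 hk2, mul_nonneg hp2 hk1,
        mul_nonneg hu1 hw1, mul_nonneg hΔu hΔw]
    · -- corners 11 and 21 in region 2 : the key lemma applies
      have hkey := maxmin_key u1 u2 w1 w2 p1 p2 k1 k2 hu1 hu12 hw1 hw12 hw2 hp1 hp2
        hk1 hk2 hs1 hs2 hmp hmk h11 h21
      rcases le_total (u1*(1-w2)) (p1*k2) with h12 | h12 <;>
        (first | rw [min_eq_left h12] | rw [min_eq_right h12]) <;>
      rcases le_total (u2*(1-w2)) (p2*k2) with h22 | h22 <;>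
        (first | rw [min_eq_left h22] | rw [min_eq_right h22]) <;>
      nlinarith [hkey, mul_le_mul_of_nonneg_right h11 hΔu, mul_le_mul_of_nonneg_right h11 hΔw,
        mul_le_mul_of_nonneg_right h21 hΔw, mul_le_mul_of_nonneg_right h12 hΔu,
        mul_le_mul_of_nonneg_right h22 hΔw,
        mul_nonneg (sub_nonneg.2 hs1) hk1, mul_nonneg (sub_nonneg.2 hs2) hp2,
        mul_nonneg hp1 hk1, mul_nonneg hp2 hk2, mul_nonneg hΔu hΔw]

section Maxmin

variable {φ χ : ℝ → ℝ}

lemma marshall_ge_id (hφ : IsMarshallGen φ) {u : ℝ} (hu : u ∈ Set.Icc (0:ℝ) 1) :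
    u ≤ φ u := by
  have := hφ.2.2.2.2 u 1 hu.1 hu.2 le_rfl
  rw [hφ.2.2.2.1] at this
  linarith

lemma maxmin_is_copula (hφ : IsMarshallGen φ) (hχ : IsMaxminGen χ) :
    IsCopula (maxminCopula φ χ) := by
  obtain ⟨hφmono, hφrange, hφ0, hφ1, hφstar⟩ := hφ
  obtain ⟨hχmono, hχrange, hχ0, hχ1, hχle, hχstar⟩ := hχ
  have hφid : ∀ u ∈ Set.Icc (0:ℝ) 1, u ≤ φ u :=
    fun u hu => marshall_ge_id ⟨hφmono, hφrange, hφ0, hφ1, hφstar⟩ hu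
  refine ⟨?_, ?_, ?_, ?_, ?_, ?_⟩
  · -- range
    intro u hu v hv
    have h1 : 0 ≤ (φ u - u) * (v - χ v) :=
      mul_nonneg (by linarith [hφid u hu]) (by linarith [hχle v hv])
    have h2 : 0 ≤ u * (1 - v) := mul_nonneg hu.1 (by linarith [hv.2])
    constructor
    · have : 0 ≤ min (u * (1 - v)) ((φ u - u) * (v - χ v)) := le_min h2 h1
      have huv : 0 ≤ u * v := mul_nonneg hu.1 hv.1
      simp only [maxminCopula]; linarith
    · have : min (u * (1 - v)) ((φ u - u) * (v - χ v)) ≤ u * (1 - v) := min_le_left _ _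
      have : u * v + min (u * (1 - v)) ((φ u - u) * (v - χ v)) ≤ u := by nlinarith
      simp only [maxminCopula]; linarith [hu.2]
  · intro u hu
    simp only [maxminCopula, hχ0, sub_zero, mul_zero, sub_self]
    rw [min_eq_right (mul_nonneg hu.1 zero_le_one)]; norm_num
  · intro v hv
    simp only [maxminCopula, hφ0, sub_zero, zero_mul, zero_add]
    rw [min_self]
  · intro u hu
    simp only [maxminCopula, hχ1, sub_self, mul_zero, mul_one]
    rw [min_self, add_zero]
  · intro v hv
    simp only [maxminCopula, hφ1, sub_self, zero_mul, one_mul]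
    rw [min_eq_right (by linarith [hv.2] : (0:ℝ) ≤ 1 - v), add_zero]
  · intro u1 u2 w1 w2 h0u hu12 hu21 h0w hw12 hw21
    have hu1I : u1 ∈ Set.Icc (0:ℝ) 1 := ⟨h0u, by linarith⟩
    have hu2I : u2 ∈ Set.Icc (0:ℝ) 1 := ⟨by linarith, hu21⟩
    have hw1I : w1 ∈ Set.Icc (0:ℝ) 1 := ⟨h0w, by linarith⟩
    have hw2I : w2 ∈ Set.Icc (0:ℝ) 1 := ⟨by linarith, hw21⟩
    have key := vol_nonneg u1 u2 w1 w2 (φ u1 - u1) (φ u2 - u2) (w1 - χ w1) (w2 - χ w2)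
      h0u hu12 hu21 h0w hw12 hw21
      (by linarith [hφid u1 hu1I]) (by linarith [hφid u2 hu2I])
      (by linarith [hχle w1 hw1I]) (by linarith [hχle w2 hw2I])
      (by nlinarith [hφstar u1 u2 h0u hu12 hu21])
      (by nlinarith [hχstar w1 w2 h0w hw12 hw21])
      (by linarith [hφmono hu1I hu2I hu12])
      (by linarith [hχmono hw1I hw2I hw12])
    simp only [maxminCopula]
    linarith [key]

end Maxmin

lemma maxmin_mono {φ1 φ2 χ1 χ2 : ℝ → ℝ}
    (hφ1 : IsMarshallGen φ1) (hφ2 : IsMarshallGen φ2)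
    (hχ1 : IsMaxminGen χ1) (hχ2 : IsMaxminGen χ2)
    (hφ : ∀ u ∈ Set.Icc (0:ℝ) 1, φ1 u ≤ φ2 u)
    (hχ : ∀ w ∈ Set.Icc (0:ℝ) 1, χ2 w ≤ χ1 w)
    {u w : ℝ} (hu : u ∈ Set.Icc (0:ℝ) 1) (hw : w ∈ Set.Icc (0:ℝ) 1) :
    maxminCopula φ1 χ1 u w ≤ maxminCopula φ2 χ2 u w := by
  have h1 : (φ1 u - u) * (w - χ1 w) ≤ (φ2 u - u) * (w - χ2 w) := by
    apply mul_le_mul (by linarith [hφ u hu]) (by linarith [hχ w hw])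
    · linarith [hχ1.2.2.2.2.1 w hw]
    · linarith [marshall_ge_id hφ2 hu]
  simp only [maxminCopula]
  exact add_le_add le_rfl (min_le_min le_rfl h1)


/-- The imprecise maxmin copula (C^MM_{φ̲,χ̄}, C^MM_{φ̄,χ̲}) is coherent. -/
theorem imprecise_maxmin_coherent
    (φl φh χl χh : ℝ → ℝ)
    (hφl : IsMarshallGen φl) (hφh : IsMarshallGen φh)
    (hχl : IsMaxminGen χl) (hχh : IsMaxminGen χh)
    (hφ : ∀ u ∈ Set.Icc (0:ℝ) 1, φl u ≤ φh u)
    (hχ : ∀ w ∈ Set.Icc (0:ℝ) 1, χl w ≤ χh w) :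
    ∀ u ∈ Set.Icc (0:ℝ) 1, ∀ w ∈ Set.Icc (0:ℝ) 1,
      sInf {c : ℝ | ∃ C : ℝ → ℝ → ℝ, IsCopula C ∧
          (∀ u' ∈ Set.Icc (0:ℝ) 1, ∀ w' ∈ Set.Icc (0:ℝ) 1,
            maxminCopula φl χh u' w' ≤ C u' w' ∧
            C u' w' ≤ maxminCopula φh χl u' w') ∧
          c = C u w} = maxminCopula φl χh u w ∧
      sSup {c : ℝ | ∃ C : ℝ → ℝ → ℝ, IsCopula C ∧
          (∀ u' ∈ Set.Icc (0:ℝ) 1, ∀ w' ∈ Set.Icc (0:ℝ) 1,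
            maxminCopula φl χh u' w' ≤ C u' w' ∧
            C u' w' ≤ maxminCopula φh χl u' w') ∧
          c = C u w} = maxminCopula φh χl u w := by
  intro u hu w hw
  set Cl := maxminCopula φl χh with hCl
  set Ch := maxminCopula φh χl with hCh
  have hClcop : IsCopula Cl := maxmin_is_copula hφl hχh
  have hChcop : IsCopula Ch := maxmin_is_copula hφh hχl
  have hcomp : ∀ u' ∈ Set.Icc (0:ℝ) 1, ∀ w' ∈ Set.Icc (0:ℝ) 1,
      Cl u' w' ≤ Ch u' w' := fun u' hu' w' hw' =>
    maxmin_mono hφl hφh hχh hχl hφ hχ hu' hw'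
  set S := {c : ℝ | ∃ C : ℝ → ℝ → ℝ, IsCopula C ∧
      (∀ u' ∈ Set.Icc (0:ℝ) 1, ∀ w' ∈ Set.Icc (0:ℝ) 1,
        maxminCopula φl χh u' w' ≤ C u' w' ∧
        C u' w' ≤ maxminCopula φh χl u' w') ∧ c = C u w} with hS
  have hmemL : Cl u w ∈ S :=
    ⟨Cl, hClcop, fun u' hu' w' hw' => ⟨le_rfl, hcomp u' hu' w' hw'⟩, rfl⟩
  have hmemH : Ch u w ∈ S :=
    ⟨Ch, hChcop, fun u' hu' w' hw' => ⟨hcomp u' hu' w' hw', le_rfl⟩, rfl⟩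
  have hlb : ∀ c ∈ S, Cl u w ≤ c := by
    rintro c ⟨C, _, hbound, rfl⟩
    exact (hbound u hu w hw).1
  have hub : ∀ c ∈ S, c ≤ Ch u w := by
    rintro c ⟨C, _, hbound, rfl⟩
    exact (hbound u hu w hw).2
  constructor
  · exact le_antisymm (csInf_le ⟨Cl u w, hlb⟩ hmemL) (le_csInf ⟨Cl u w, hmemL⟩ hlb)
  · exact le_antisymm (csSup_le ⟨Cl u w, hmemL⟩ hub) (le_csSup ⟨Ch u w, hub⟩ hmemH)
end

section
/- Let F_X, F_Y, F_Z : ℝ → [0,1] be nondecreasing, set F = F_X·F_Z and G = F_Y·F_Z, and let φ, ψ : [0,1] → [0,1] be Marshall generators such that φ(F(x)) = F_X(x) for every x with F(x) > 0 and ψ(G(y)) = F_Y(y) for every y with G(y) > 0. Then for all x, y ∈ ℝ, C^M_{φ,ψ}(F(x), G(y)) = min{φ(F(x))·G(y), ψ(G(y))·F(x)} = F_X(x)·F_Y(y)·F_Z(min(x,y)). -/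
/-- With F = F_X·F_Z, G = F_Y·F_Z and Marshall generators φ, ψ associated
to them, the Marshall copula applied to (F(x), G(y)) equals F_X(x)·F_Y(y)·F_Z(min(x,y)). -/
theorem marshall_copula_shock_representation
    (FX FY FZ : ℝ → ℝ)
    (hFXmono : Monotone FX) (hFYmono : Monotone FY) (hFZmono : Monotone FZ)
    (hFX01 : ∀ x : ℝ, FX x ∈ Set.Icc (0:ℝ) 1)
    (hFY01 : ∀ y : ℝ, FY y ∈ Set.Icc (0:ℝ) 1)
    (hFZ01 : ∀ x : ℝ, FZ x ∈ Set.Icc (0:ℝ) 1)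
    (φ ψ : ℝ → ℝ) (hφ : IsMarshallGen φ) (hψ : IsMarshallGen ψ)
    (hφF : ∀ x : ℝ, 0 < FX x * FZ x → φ (FX x * FZ x) = FX x)
    (hψG : ∀ y : ℝ, 0 < FY y * FZ y → ψ (FY y * FZ y) = FY y) :
    ∀ x y : ℝ,
      min (φ (FX x * FZ x) * (FY y * FZ y)) (ψ (FY y * FZ y) * (FX x * FZ x)) =
        FX x * FY y * FZ (min x y) := by
  intro x y
  have hφ0 := hφ.2.2.1
  have hψ0 := hψ.2.2.1
  rcases le_total x y with hxy | hxy
  · rw [min_eq_left hxy]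
    have hcd : FZ x ≤ FZ y := hFZmono hxy
    rcases (mul_nonneg (hFX01 x).1 (hFZ01 x).1).eq_or_lt' with hF | hF
    · rw [hF, hφ0, zero_mul, mul_zero, min_self]
      rcases mul_eq_zero.mp hF with h | h
      · rw [h]; ring
      · rw [h]; ring
    · rw [hφF x hF]
      rcases (mul_nonneg (hFY01 y).1 (hFZ01 y).1).eq_or_lt' with hG | hG
      · rw [hG, hψ0, mul_zero, zero_mul, min_self]
        have hcx : 0 < FZ x := by
          rcases (hFZ01 x).1.eq_or_lt' with h | h
          · rw [h, mul_zero] at hF; exact absurd hF (lt_irrefl 0)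
          · exact h
        have hb : FY y = 0 := by
          rcases mul_eq_zero.mp hG with h | h
          · exact h
          · exact absurd h (lt_of_lt_of_le hcx hcd).ne'
        rw [hb]; ring
      · rw [hψG y hG]
        have h : FY y * (FX x * FZ x) ≤ FX x * (FY y * FZ y) := by
          nlinarith [mul_le_mul_of_nonneg_left hcd (mul_nonneg (hFX01 x).1 (hFY01 y).1)]
        rw [min_eq_right h]; ring
  · rw [min_eq_right hxy]
    have hcd : FZ y ≤ FZ x := hFZmono hxy
    rcases (mul_nonneg (hFY01 y).1 (hFZ01 y).1).eq_or_lt' with hG | hG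
    · rw [hG, hψ0, mul_zero, zero_mul, min_self]
      rcases mul_eq_zero.mp hG with h | h
      · rw [h]; ring
      · rw [h]; ring
    · rw [hψG y hG]
      rcases (mul_nonneg (hFX01 x).1 (hFZ01 x).1).eq_or_lt' with hF | hF
      · rw [hF, hφ0, zero_mul, mul_zero, min_self]
        have hcy : 0 < FZ y := by
          rcases (hFZ01 y).1.eq_or_lt' with h | h
          · rw [h, mul_zero] at hG; exact absurd hG (lt_irrefl 0)
          · exact h
        have ha : FX x = 0 := by
          rcases mul_eq_zero.mp hF with h | h
          · exact h
          · exact absurd h (lt_of_lt_of_le hcy hcd).ne'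
        rw [ha]; ring
      · rw [hφF x hF]
        have h : FX x * (FY y * FZ y) ≤ FY y * (FX x * FZ x) := by
          nlinarith [mul_le_mul_of_nonneg_left hcd (mul_nonneg (hFX01 x).1 (hFY01 y).1)]
        rw [min_eq_left h]; ring
end

section
/- Let (Ω, 𝒜, P) be a probability space and let X, Y, Z be mutually independent real-valued random variables on Ω. Then for all x, y ∈ ℝ: if x ≤ y, then P({ω : max(X(ω), Z(ω)) ≤ x and min(Y(ω), Z(ω)) ≤ y}) = P({X ≤ x}) · P({Z ≤ x}); and if y ≤ x, then P({ω : max(X(ω), Z(ω)) ≤ x and min(Y(ω), Z(ω)) ≤ y}) = P({X ≤ x}) · (P({Z ≤ y}) + P({Y ≤ y})·(P({Z ≤ x}) − P({Z ≤ y}))). -/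
open MeasureTheory ProbabilityTheory

/-- For mutually independent X, Y, Z, the joint distribution function of
(max{X,Z}, min{Y,Z}) at (x,y) equals P(X≤x)·P(Z≤x) if x ≤ y, and
P(X≤x)·(P(Z≤y) + P(Y≤y)·(P(Z≤x) − P(Z≤y))) if y ≤ x. -/
theorem joint_cdf_max_min_of_indep
    {Ω : Type*} [MeasurableSpace Ω] (P : Measure Ω) [IsProbabilityMeasure P]
    (X Y Z : Ω → ℝ) (hX : Measurable X) (hY : Measurable Y) (hZ : Measurable Z)
    (hindep : iIndepFun ![X, Y, Z] P) :
    ∀ x y : ℝ,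
      (x ≤ y →
        P {ω | max (X ω) (Z ω) ≤ x ∧ min (Y ω) (Z ω) ≤ y} =
          P {ω | X ω ≤ x} * P {ω | Z ω ≤ x}) ∧
      (y ≤ x →
        P {ω | max (X ω) (Z ω) ≤ x ∧ min (Y ω) (Z ω) ≤ y} =
          P {ω | X ω ≤ x} *
            (P {ω | Z ω ≤ y} + P {ω | Y ω ≤ y} * (P {ω | Z ω ≤ x} - P {ω | Z ω ≤ y}))) := by
  intro x y
  have hXZ : IndepFun X Z P := by
    have := hindep.indepFun (i := 0) (j := 2) (by decide)
    simpa using this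
  have hmulXZ : ∀ s t : Set ℝ, MeasurableSet s → MeasurableSet t →
      P (X ⁻¹' s ∩ Z ⁻¹' t) = P (X ⁻¹' s) * P (Z ⁻¹' t) :=
    fun s t hs ht => hXZ.measure_inter_preimage_eq_mul s t hs ht
  constructor
  · intro hxy
    have hset : {ω | max (X ω) (Z ω) ≤ x ∧ min (Y ω) (Z ω) ≤ y} =
        X ⁻¹' Set.Iic x ∩ Z ⁻¹' Set.Iic x := by
      ext ω
      simp only [Set.mem_setOf_eq, max_le_iff, min_le_iff, Set.mem_inter_iff,
        Set.mem_preimage, Set.mem_Iic]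
      exact ⟨fun h => h.1, fun h => ⟨h, Or.inr (h.2.trans hxy)⟩⟩
    rw [hset, hmulXZ _ _ measurableSet_Iic measurableSet_Iic]
    rfl
  · intro hyx
    have hset : {ω | max (X ω) (Z ω) ≤ x ∧ min (Y ω) (Z ω) ≤ y} =
        (X ⁻¹' Set.Iic x ∩ Z ⁻¹' Set.Iic y) ∪
        (X ⁻¹' Set.Iic x ∩ (Y ⁻¹' Set.Iic y ∩ Z ⁻¹' Set.Ioc y x)) := by
      ext ω
      simp only [Set.mem_setOf_eq, max_le_iff, min_le_iff, Set.mem_union, Set.mem_inter_iff,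
        Set.mem_preimage, Set.mem_Iic, Set.mem_Ioc]
      constructor
      · rintro ⟨⟨hx1, hx2⟩, hy1⟩
        by_cases hzy : Z ω ≤ y
        · exact Or.inl ⟨hx1, hzy⟩
        · exact Or.inr ⟨hx1, hy1.resolve_right hzy, lt_of_not_ge hzy, hx2⟩
      · rintro (⟨hx1, hzy⟩ | ⟨hx1, hy1, hzy, hzx⟩)
        · exact ⟨⟨hx1, hzy.trans hyx⟩, Or.inr hzy⟩
        · exact ⟨⟨hx1, hzx⟩, Or.inl hy1⟩
    have hdisj : Disjoint (X ⁻¹' Set.Iic x ∩ Z ⁻¹' Set.Iic y)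
        (X ⁻¹' Set.Iic x ∩ (Y ⁻¹' Set.Iic y ∩ Z ⁻¹' Set.Ioc y x)) := by
      apply Set.disjoint_left.mpr
      rintro ω ⟨-, hz⟩ ⟨-, -, hz'⟩
      exact absurd hz (not_le.mpr hz'.1)
    have hmeas : MeasurableSet (X ⁻¹' Set.Iic x ∩ (Y ⁻¹' Set.Iic y ∩ Z ⁻¹' Set.Ioc y x)) :=
      ((hX measurableSet_Iic).inter ((hY measurableSet_Iic).inter (hZ measurableSet_Ioc)))
    have h3 : P (X ⁻¹' Set.Iic x ∩ (Y ⁻¹' Set.Iic y ∩ Z ⁻¹' Set.Ioc y x)) =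
        P (X ⁻¹' Set.Iic x) * (P (Y ⁻¹' Set.Iic y) * P (Z ⁻¹' Set.Ioc y x)) := by
      have := hindep.measure_inter_preimage_eq_mul (m := fun _ => inferInstance)
        Finset.univ (sets := ![Set.Iic x, Set.Iic y, Set.Ioc y x])
        (fun i _ => by fin_cases i <;>
          simp [measurableSet_Iic, measurableSet_Ioc])
      have heq : (⋂ i, ![X, Y, Z] i ⁻¹' ![Set.Iic x, Set.Iic y, Set.Ioc y x] i) =
          X ⁻¹' Set.Iic x ∩ (Y ⁻¹' Set.Iic y ∩ Z ⁻¹' Set.Ioc y x) := by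
        ext ω
        simp [Set.mem_iInter, Fin.forall_fin_succ, and_assoc]
      simpa [Fin.prod_univ_three, heq, mul_assoc] using this
    have hIoc : P (Z ⁻¹' Set.Ioc y x) = P (Z ⁻¹' Set.Iic x) - P (Z ⁻¹' Set.Iic y) := by
      have : Z ⁻¹' Set.Ioc y x = Z ⁻¹' Set.Iic x \ Z ⁻¹' Set.Iic y := by
        ext ω; simp only [Set.mem_preimage, Set.mem_Ioc, Set.mem_diff, Set.mem_Iic, not_le]
        tauto
      rw [this, measure_diff (Set.preimage_mono (Set.Iic_subset_Iic.mpr hyx))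
        (hZ measurableSet_Iic).nullMeasurableSet (measure_ne_top P _)]
    rw [hset, measure_union hdisj hmeas,
      hmulXZ _ _ measurableSet_Iic measurableSet_Iic, h3, hIoc, ← mul_add]
    rfl
end

section
/- Let F_X, F_Y, F_Z : ℝ → [0,1] be nondecreasing, set F = F_X·F_Z and K = F_Y + F_Z − F_Y·F_Z, and let φ be a Marshall generator and χ a maxmin second generator such that φ(F(x)) = F_X(x) for every x with F(x) > 0 and χ(K(y)) = F_Y(y) for every y with K(y) < 1. Then for all x, y ∈ ℝ, C^MM_{φ,χ}(F(x), K(y)) equals F_X(x)·F_Z(x) when x ≤ y, and equals F_X(x)·(F_Z(y) + F_Y(y)·(F_Z(x) − F_Z(y))) when y ≤ x. -/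
/-- With F = F_X·F_Z and K = F_Y + F_Z − F_Y·F_Z and generators φ, χ
associated to them, C^MM_{φ,χ}(F(x), K(y)) equals F_X(x)·F_Z(x) when x ≤ y and
F_X(x)·(F_Z(y) + F_Y(y)·(F_Z(x) − F_Z(y))) when y ≤ x. -/
theorem maxmin_copula_shock_representation
    (FX FY FZ : ℝ → ℝ)
    (hFXmono : Monotone FX) (hFYmono : Monotone FY) (hFZmono : Monotone FZ)
    (hFX01 : ∀ x : ℝ, FX x ∈ Set.Icc (0:ℝ) 1)
    (hFY01 : ∀ y : ℝ, FY y ∈ Set.Icc (0:ℝ) 1)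
    (hFZ01 : ∀ x : ℝ, FZ x ∈ Set.Icc (0:ℝ) 1)
    (φ χ : ℝ → ℝ) (hφ : IsMarshallGen φ) (hχ : IsMaxminGen χ)
    (hφF : ∀ x : ℝ, 0 < FX x * FZ x → φ (FX x * FZ x) = FX x)
    (hχK : ∀ y : ℝ, FY y + FZ y - FY y * FZ y < 1 →
      χ (FY y + FZ y - FY y * FZ y) = FY y) :
    ∀ x y : ℝ,
      (x ≤ y →
        maxminCopula φ χ (FX x * FZ x) (FY y + FZ y - FY y * FZ y) = FX x * FZ x) ∧
      (y ≤ x →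
        maxminCopula φ χ (FX x * FZ x) (FY y + FZ y - FY y * FZ y) =
          FX x * (FZ y + FY y * (FZ x - FZ y))) := by
  obtain ⟨hφmono, hφ01, hφ0, hφ1, hφratio⟩ := hφ
  obtain ⟨hχmono, hχ01, hχ0, hχ1, hχle, hχratio⟩ := hχ
  intro x y
  obtain ⟨hX0, hX1⟩ := hFX01 x
  obtain ⟨hY0, hY1⟩ := hFY01 y
  obtain ⟨hZx0, hZx1⟩ := hFZ01 x
  obtain ⟨hZy0, hZy1⟩ := hFZ01 y
  have hu0 : 0 ≤ FX x * FZ x := mul_nonneg hX0 hZx0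
  have hu1 : FX x * FZ x ≤ 1 := by nlinarith
  have hw0 : 0 ≤ FY y + FZ y - FY y * FZ y := by nlinarith
  have hw1 : FY y + FZ y - FY y * FZ y ≤ 1 := by nlinarith
  have hφu : FX x * FZ x ≤ φ (FX x * FZ x) := by
    have := hφratio (FX x * FZ x) 1 hu0 hu1 le_rfl
    rw [hφ1] at this; linarith
  have hχw : χ (FY y + FZ y - FY y * FZ y) ≤ FY y + FZ y - FY y * FZ y :=
    hχle _ ⟨hw0, hw1⟩
  constructor
  · intro hxy
    rcases eq_or_lt_of_le hu0 with hu | hu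
    · have h0 : FX x * FZ x = 0 := hu.symm
      simp only [maxminCopula, h0, hφ0, zero_mul, sub_zero, min_self, add_zero]
    · have hφeq := hφF x hu
      rcases eq_or_lt_of_le hw1 with hwone | hwlt
      · have hmin : min ((FX x * FZ x) * (1 - (FY y + FZ y - FY y * FZ y)))
            ((φ (FX x * FZ x) - FX x * FZ x) * ((FY y + FZ y - FY y * FZ y) - χ (FY y + FZ y - FY y * FZ y)))
            = (FX x * FZ x) * (1 - (FY y + FZ y - FY y * FZ y)) := by
          apply min_eq_left
          rw [hwone]; simp
          exact mul_nonneg (by linarith) (by linarith)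
        simp only [maxminCopula, hmin]; ring
      · have hχeq := hχK y hwlt
        have hcd : FZ x ≤ FZ y := hFZmono hxy
        have hmin : min ((FX x * FZ x) * (1 - (FY y + FZ y - FY y * FZ y)))
            ((φ (FX x * FZ x) - FX x * FZ x) * ((FY y + FZ y - FY y * FZ y) - χ (FY y + FZ y - FY y * FZ y)))
            = (FX x * FZ x) * (1 - (FY y + FZ y - FY y * FZ y)) := by
          apply min_eq_left
          rw [hφeq, hχeq]
          nlinarith [mul_nonneg hX0 (sub_nonneg.2 hY1), mul_nonneg hX0 hZy0]
        simp only [maxminCopula, hmin]; ring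
  · intro hyx
    have hcd : FZ y ≤ FZ x := hFZmono hyx
    rcases eq_or_lt_of_le hu0 with hu | hu
    · have h0 : FX x * FZ x = 0 := hu.symm
      have hrhs : FX x * (FZ y + FY y * (FZ x - FZ y)) = 0 := by
        rcases mul_eq_zero.1 h0 with h | h
        · rw [h]; ring
        · have : FZ y = 0 := le_antisymm (h ▸ hcd) hZy0
          rw [h, this]; ring
      simp only [maxminCopula, h0, hφ0, zero_mul, sub_zero, min_self, add_zero, hrhs]
    · have hφeq := hφF x hu
      rcases eq_or_lt_of_le hw1 with hwone | hwlt
      · have hmin : min ((FX x * FZ x) * (1 - (FY y + FZ y - FY y * FZ y)))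
            ((φ (FX x * FZ x) - FX x * FZ x) * ((FY y + FZ y - FY y * FZ y) - χ (FY y + FZ y - FY y * FZ y)))
            = (FX x * FZ x) * (1 - (FY y + FZ y - FY y * FZ y)) := by
          apply min_eq_left
          rw [hwone]; simp
          exact mul_nonneg (by linarith) (by linarith)
        have hfac : (1 - FY y) * (1 - FZ y) = 0 := by nlinarith
        rcases mul_eq_zero.1 hfac with h | h
        · have hb : FY y = 1 := by linarith
          simp only [maxminCopula, hmin]
          rw [hb]; ring
        · have hd : FZ y = 1 := by linarith
          have hc : FZ x = 1 := le_antisymm hZx1 (hd ▸ hcd)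
          simp only [maxminCopula, hmin]
          rw [hd, hc]; ring
      · have hχeq := hχK y hwlt
        have hmin : min ((FX x * FZ x) * (1 - (FY y + FZ y - FY y * FZ y)))
            ((φ (FX x * FZ x) - FX x * FZ x) * ((FY y + FZ y - FY y * FZ y) - χ (FY y + FZ y - FY y * FZ y)))
            = (φ (FX x * FZ x) - FX x * FZ x) * ((FY y + FZ y - FY y * FZ y) - χ (FY y + FZ y - FY y * FZ y)) := by
          apply min_eq_right
          rw [hφeq, hχeq]
          nlinarith [mul_nonneg hX0 (sub_nonneg.2 hY1), mul_nonneg hX0 hZy0]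
        simp only [maxminCopula, hmin]
        rw [hφeq, hχeq]; ring
end
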